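/- Let Ω = (−1, 1) ⊂ ℝ, g(x) = −1 on (−1,0) and 1 on (0,1), and α > 2. Then u*(x) = 1 on (−1,0), 0 on (0,1) is the unique (a.e.) minimizer over {u ∈ BV(Ω) : 0 ≤ u ≤ 1} of α∫_Ω u g dx + TV_Ω(u), where TV_Ω(u) = sup{ ∫_Ω u p' dx : p ∈ C₀¹(Ω), |p| ≤ 1 }. -/

import Mathlib

open Real Filter Set MeasureTheory Topology

local notation "T" => Real.smoothTransition




lemma derivT_cont : Continuous (deriv T) :=
  (Real.smoothTransition.contDiff (n := 1)).continuous_deriv le_rfl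

lemma derivT_zero_of_nonpos {y : ℝ} (hy : y ≤ 0) : deriv T y = 0 := by
  have h1 : Set.EqOn (deriv T) (fun _ => (0:ℝ)) (Set.Iio 0) := by
    intro z hz
    have : T =ᶠ[nhds z] (fun _ => (0:ℝ)) := by
      filter_upwards [Iio_mem_nhds (hz : z < 0)] with w hw
      exact Real.smoothTransition.zero_of_nonpos hw.le
    simp [this.deriv_eq]
  have h2 : Set.EqOn (deriv T) (fun _ => (0:ℝ)) (closure (Set.Iio 0)) :=
    h1.closure derivT_cont continuous_const
  have := h2 (by simpa [closure_Iio] using hy)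
  simpa using this

lemma derivT_zero_of_one_le {y : ℝ} (hy : 1 ≤ y) : deriv T y = 0 := by
  have h1 : Set.EqOn (deriv T) (fun _ => (0:ℝ)) (Set.Ioi 1) := by
    intro z hz
    have : T =ᶠ[nhds z] (fun _ => (1:ℝ)) := by
      filter_upwards [Ioi_mem_nhds (hz : 1 < z)] with w hw
      exact Real.smoothTransition.one_of_one_le hw.le
    simp [this.deriv_eq]
  have h2 : Set.EqOn (deriv T) (fun _ => (0:ℝ)) (closure (Set.Ioi 1)) :=
    h1.closure derivT_cont continuous_const
  have := h2 (by simpa [closure_Ioi] using hy)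
  simpa using this

lemma existsC : ∃ C : ℝ, 0 ≤ C ∧ ∀ y : ℝ, |deriv T y| ≤ C := by
  obtain ⟨z, _, hz⟩ := isCompact_Icc.exists_isMaxOn (Set.nonempty_Icc.2 (by norm_num : (0:ℝ) ≤ 1))
    (derivT_cont.abs.continuousOn)
  refine ⟨|deriv T z|, abs_nonneg _, fun y => ?_⟩
  rcases le_or_gt y 0 with h | h
  · simp [derivT_zero_of_nonpos h, abs_nonneg]
  rcases le_or_gt 1 y with h1 | h1
  · simp [derivT_zero_of_one_le h1, abs_nonneg]
  · exact hz ⟨h.le, h1.le⟩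




noncomputable def pfun (t : ℝ) (x : ℝ) : ℝ :=
  (1 - x^2) * (T ((x + 1 - t)/t) * T ((1 - t - x)/t))

lemma pfun_contDiff (t : ℝ) : ContDiff ℝ 1 (pfun t) := by
  unfold pfun
  have h1 : ContDiff ℝ 1 (fun x : ℝ => T ((x + 1 - t)/t)) :=
    Real.smoothTransition.contDiff.comp (((contDiff_id.add contDiff_const).sub contDiff_const).div_const t)
  have h2 : ContDiff ℝ 1 (fun x : ℝ => T ((1 - t - x)/t)) :=
    Real.smoothTransition.contDiff.comp ((contDiff_const.sub contDiff_id).div_const t)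
  exact (contDiff_const.sub (contDiff_id.pow 2)).mul (h1.mul h2)

lemma pfun_zero_outside {t x : ℝ} (ht : 0 < t) (hx : x ∉ Ioo (t - 1) (1 - t)) : pfun t x = 0 := by
  rw [Set.mem_Ioo, not_and_or] at hx
  unfold pfun
  rcases hx with h | h
  · push_neg at h
    rw [Real.smoothTransition.zero_of_nonpos (x := (x + 1 - t)/t)
      (div_nonpos_of_nonpos_of_nonneg (by linarith) ht.le)]
    ring
  · push_neg at h
    rw [Real.smoothTransition.zero_of_nonpos (x := (1 - t - x)/t)
      (div_nonpos_of_nonpos_of_nonneg (by linarith) ht.le)]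
    ring

lemma pfun_hcs {t : ℝ} (ht : 0 < t) : HasCompactSupport (pfun t) :=
  HasCompactSupport.intro isCompact_Icc (fun x hx =>
    pfun_zero_outside ht (fun h => hx ⟨h.1.le, h.2.le⟩))

lemma pfun_tsupport {t : ℝ} (ht : 0 < t) (ht1 : t < 1) : tsupport (pfun t) ⊆ Set.Ioo (-1 : ℝ) 1 := by
  have h1 : Function.support (pfun t) ⊆ Set.Icc (t-1) (1-t) := by
    intro x hx
    by_contra h
    exact hx (pfun_zero_outside ht (fun h2 => h ⟨h2.1.le, h2.2.le⟩))
  have h2 : tsupport (pfun t) ⊆ Set.Icc (t-1) (1-t) := by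
    rw [tsupport]
    exact closure_minimal h1 isClosed_Icc
  refine h2.trans ?_
  intro x hx
  constructor <;> [nlinarith [hx.1]; nlinarith [hx.2]]

lemma pfun_abs_le {t : ℝ} (ht : 0 < t) (ht1 : t < 1) : ∀ x, |pfun t x| ≤ 1 := by
  intro x
  by_cases hx : x ∈ Ioo (t-1) (1-t)
  · have hx1 : -1 < x := by linarith [hx.1]
    have hx2 : x < 1 := by linarith [hx.2]
    have h0 : 0 ≤ 1 - x^2 := by nlinarith
    have h1 : 1 - x^2 ≤ 1 := by nlinarith
    have hT1 := Real.smoothTransition.nonneg ((x + 1 - t)/t)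
    have hT2 := Real.smoothTransition.le_one ((x + 1 - t)/t)
    have hT3 := Real.smoothTransition.nonneg ((1 - t - x)/t)
    have hT4 := Real.smoothTransition.le_one ((1 - t - x)/t)
    have hprod0 : 0 ≤ T ((x + 1 - t)/t) * T ((1 - t - x)/t) := mul_nonneg hT1 hT3
    have hprod1 : T ((x + 1 - t)/t) * T ((1 - t - x)/t) ≤ 1 := mul_le_one₀ hT2 hT3 hT4
    rw [abs_le]
    unfold pfun
    constructor
    · nlinarith
    · calc (1 - x^2) * (T ((x + 1 - t)/t) * T ((1 - t - x)/t)) ≤ 1 * 1 := by nlinarith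
        _ = 1 := by ring
  · simp [pfun_zero_outside ht hx]





noncomputable def Dfun (t : ℝ) (x : ℝ) : ℝ :=
  (-2*x) * (T ((x + 1 - t)/t) * T ((1 - t - x)/t))
    + (1 - x^2) * (deriv T ((x + 1 - t)/t) * (1/t) * T ((1 - t - x)/t)
        + T ((x + 1 - t)/t) * (deriv T ((1 - t - x)/t) * (-1/t)))

lemma T_hasDerivAt (y : ℝ) : HasDerivAt T (deriv T y) y :=
  ((Real.smoothTransition.contDiff (n := 1)).differentiable (by norm_num)).differentiableAt.hasDerivAt

lemma pfun_hasDerivAt {t : ℝ} (x : ℝ) : HasDerivAt (pfun t) (Dfun t x) x := by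
  have hA : HasDerivAt (fun x : ℝ => T ((x + 1 - t)/t)) (deriv T ((x + 1 - t)/t) * (1/t)) x := by
    have hin : HasDerivAt (fun x : ℝ => (x + 1 - t)/t) (1/t) x := by
      simpa using (((hasDerivAt_id x).add_const 1).sub_const t).div_const t
    exact (T_hasDerivAt _).comp x hin
  have hB : HasDerivAt (fun x : ℝ => T ((1 - t - x)/t)) (deriv T ((1 - t - x)/t) * (-1/t)) x := by
    have hin : HasDerivAt (fun x : ℝ => (1 - t - x)/t) (-1/t) x := by
      have : HasDerivAt (fun x : ℝ => 1 - t - x) (-1) x := by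
        simpa using (hasDerivAt_id x).const_sub (1 - t)
      simpa using this.div_const t
    exact (T_hasDerivAt _).comp x hin
  have hQ : HasDerivAt (fun x : ℝ => 1 - x^2) (-2*x) x := by
    have := (hasDerivAt_pow 2 x).const_sub (1:ℝ)
    exact this.congr_deriv (by norm_num)
  have := hQ.mul (hA.mul hB)
  exact this.congr_deriv rfl

lemma deriv_pfun (t x : ℝ) : deriv (pfun t) x = Dfun t x := (pfun_hasDerivAt x).deriv

lemma deriv_pfun_local {t x : ℝ} (ht : 0 < t) (h1 : 2*t - 1 < x) (h2 : x < 1 - 2*t) :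
    deriv (pfun t) x = -2*x := by
  have heq : pfun t =ᶠ[nhds x] (fun y => 1 - y^2) := by
    filter_upwards [Ioo_mem_nhds h1 h2] with y hy
    unfold pfun
    rw [Real.smoothTransition.one_of_one_le (x := (y + 1 - t)/t) (by rw [le_div_iff₀ ht]; linarith [hy.1]),
        Real.smoothTransition.one_of_one_le (x := (1 - t - y)/t) (by rw [le_div_iff₀ ht]; linarith [hy.2])]
    ring
  rw [heq.deriv_eq]
  have hQ : HasDerivAt (fun y : ℝ => 1 - y^2) (-2*x) x := by
    have := (hasDerivAt_pow 2 x).const_sub (1:ℝ)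
    exact this.congr_deriv (by norm_num)
  exact hQ.deriv

lemma Dfun_bound {C t x : ℝ} (hC0 : 0 ≤ C) (hC : ∀ y, |deriv T y| ≤ C)
    (hz1 : ∀ y ≤ (0:ℝ), deriv T y = 0) (hz2 : ∀ y, (1:ℝ) ≤ y → deriv T y = 0)
    (ht : 0 < t) (hx : x ∈ Icc (-1:ℝ) 1) : |Dfun t x| ≤ 2 + 8*C := by
  obtain ⟨hx1, hx2⟩ := hx
  have hTa0 := Real.smoothTransition.nonneg ((x + 1 - t)/t)
  have hTa1 := Real.smoothTransition.le_one ((x + 1 - t)/t)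
  have hTb0 := Real.smoothTransition.nonneg ((1 - t - x)/t)
  have hTb1 := Real.smoothTransition.le_one ((1 - t - x)/t)
  have hterm1 : |(-2*x) * (T ((x + 1 - t)/t) * T ((1 - t - x)/t))| ≤ 2 := by
    rw [abs_mul]
    have h1 : |(-2*x)| ≤ 2 := by rw [abs_le]; constructor <;> linarith
    have h2 : |T ((x + 1 - t)/t) * T ((1 - t - x)/t)| ≤ 1 := by
      rw [abs_mul]
      exact mul_le_one₀ (by rwa [abs_of_nonneg hTa0]) (abs_nonneg _) (by rwa [abs_of_nonneg hTb0])
    calc |(-2*x)| * |T ((x + 1 - t)/t) * T ((1 - t - x)/t)| ≤ 2 * 1 :=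
          mul_le_mul h1 h2 (abs_nonneg _) (by norm_num)
      _ = 2 := by ring
  have hS1 : |(1 - x^2) * (deriv T ((x + 1 - t)/t) * (1/t) * T ((1 - t - x)/t))| ≤ 4*C := by
    by_cases hd : deriv T ((x + 1 - t)/t) = 0
    · rw [hd]; simp [hC0]
    · have ha1 : 0 < (x + 1 - t)/t := by
        by_contra h; push_neg at h; exact hd (hz1 _ h)
      have ha2 : (x + 1 - t)/t < 1 := by
        by_contra h; push_neg at h; exact hd (hz2 _ h)
      rw [div_lt_one ht] at ha2
      rw [lt_div_iff₀ ht] at ha1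
      -- so t - 1 < x... : 0 < x + 1 - t and x + 1 - t < t
      have hx' : |1 - x^2| ≤ 4*t := by
        rw [abs_of_nonneg (by nlinarith)]
        nlinarith
      calc |(1 - x^2) * (deriv T ((x + 1 - t)/t) * (1/t) * T ((1 - t - x)/t))|
          = |1 - x^2| * (|deriv T ((x + 1 - t)/t)| * |1/t| * |T ((1 - t - x)/t)|) := by
            rw [abs_mul, abs_mul, abs_mul]
        _ ≤ (4*t) * (C * (1/t) * 1) := by
            refine mul_le_mul hx' ?_ (by positivity) (by positivity)
            refine mul_le_mul (mul_le_mul (hC _) (le_of_eq (abs_of_pos (by positivity)))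
              (abs_nonneg _) hC0) (by rwa [abs_of_nonneg hTb0]) (abs_nonneg _) (by positivity)
        _ = 4*C := by field_simp
  have hS2 : |(1 - x^2) * (T ((x + 1 - t)/t) * (deriv T ((1 - t - x)/t) * (-1/t)))| ≤ 4*C := by
    by_cases hd : deriv T ((1 - t - x)/t) = 0
    · rw [hd]; simp [hC0]
    · have ha1 : 0 < (1 - t - x)/t := by
        by_contra h; push_neg at h; exact hd (hz1 _ h)
      have ha2 : (1 - t - x)/t < 1 := by
        by_contra h; push_neg at h; exact hd (hz2 _ h)
      rw [div_lt_one ht] at ha2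
      rw [lt_div_iff₀ ht] at ha1
      have hx' : |1 - x^2| ≤ 4*t := by
        rw [abs_of_nonneg (by nlinarith)]
        nlinarith
      calc |(1 - x^2) * (T ((x + 1 - t)/t) * (deriv T ((1 - t - x)/t) * (-1/t)))|
          = |1 - x^2| * (|T ((x + 1 - t)/t)| * (|deriv T ((1 - t - x)/t)| * |(-1/t)|)) := by
            rw [abs_mul, abs_mul, abs_mul]
        _ ≤ (4*t) * (1 * (C * (1/t))) := by
            refine mul_le_mul hx' ?_ (by positivity) (by positivity)
            refine mul_le_mul (by rwa [abs_of_nonneg hTa0]) ?_ (by positivity) (by norm_num)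
            refine mul_le_mul (hC _) (le_of_eq ?_) (abs_nonneg _) hC0
            rw [abs_div, abs_neg, abs_one, abs_of_pos ht]
        _ = 4*C := by field_simp
  calc |Dfun t x| ≤ |(-2*x) * (T ((x + 1 - t)/t) * T ((1 - t - x)/t))|
        + |(1 - x^2) * (deriv T ((x + 1 - t)/t) * (1/t) * T ((1 - t - x)/t)
            + T ((x + 1 - t)/t) * (deriv T ((1 - t - x)/t) * (-1/t)))| := abs_add_le _ _
    _ ≤ 2 + (4*C + 4*C) := by
        refine add_le_add hterm1 ?_
        calc |(1 - x^2) * (deriv T ((x + 1 - t)/t) * (1/t) * T ((1 - t - x)/t)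
                + T ((x + 1 - t)/t) * (deriv T ((1 - t - x)/t) * (-1/t)))|
            = |(1 - x^2) * (deriv T ((x + 1 - t)/t) * (1/t) * T ((1 - t - x)/t))
                + (1 - x^2) * (T ((x + 1 - t)/t) * (deriv T ((1 - t - x)/t) * (-1/t)))| := by
              ring_nf
          _ ≤ _ := (abs_add_le _ _).trans (add_le_add hS1 hS2)
    _ = 2 + 8*C := by ring

lemma tv_lower (u : ℝ → ℝ) (hu : Measurable u)
    (hb : ∀ x ∈ Set.Ioo (-1:ℝ) 1, 0 ≤ u x ∧ u x ≤ 1)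
    (S : Set ℝ)
    (hS : ∀ p : ℝ → ℝ, ContDiff ℝ 1 p → HasCompactSupport p → tsupport p ⊆ Set.Ioo (-1:ℝ) 1 →
      (∀ x : ℝ, |p x| ≤ 1) → (∫ x in Set.Ioo (-1:ℝ) 1, u x * deriv p x) ∈ S)
    (hB : BddAbove S) :
    (∫ x in Set.Ioo (-1:ℝ) 1, u x * (-2*x)) ≤ sSup S := by
  obtain ⟨C, hC0, hC⟩ := existsC
  set μ := volume.restrict (Set.Ioo (-1:ℝ) 1) with hμ
  set t : ℕ → ℝ := fun n => 1/((n:ℝ)+4) with htdef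
  have ht : ∀ n, 0 < t n := fun n => by positivity
  have ht1 : ∀ n, t n < 1 := fun n => by
    rw [htdef]
    rw [div_lt_one (by positivity)]
    have : (0:ℝ) ≤ (n:ℝ) := Nat.cast_nonneg n
    linarith
  -- continuity of Dfun
  have hDcont : ∀ s : ℝ, Continuous (Dfun s) := by
    intro s
    unfold Dfun
    have c1 : Continuous fun x : ℝ => (x + 1 - s)/s :=
      ((continuous_id.add continuous_const).sub continuous_const).div_const s
    have c2 : Continuous fun x : ℝ => (1 - s - x)/s :=
      (continuous_const.sub continuous_id).div_const s
    have cT := Real.smoothTransition.continuous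
    exact ((continuous_const.mul continuous_id).mul ((cT.comp c1).mul (cT.comp c2))).add
      ((continuous_const.sub (continuous_pow 2)).mul
        ((((derivT_cont.comp c1).mul continuous_const).mul (cT.comp c2)).add
          ((cT.comp c1).mul ((derivT_cont.comp c2).mul continuous_const))))
  have hmeas : ∀ n, AEStronglyMeasurable (fun x => u x * deriv (pfun (t n)) x) μ := by
    intro n
    have : (fun x => u x * deriv (pfun (t n)) x) = fun x => u x * Dfun (t n) x := by
      funext x; rw [deriv_pfun]
    rw [this]
    exact (hu.mul (hDcont (t n)).measurable).aestronglyMeasurable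
  have hbound : ∀ n, ∀ᵐ x ∂μ, ‖u x * deriv (pfun (t n)) x‖ ≤ 2 + 8*C := by
    intro n
    filter_upwards [ae_restrict_mem measurableSet_Ioo] with x hx
    rw [Real.norm_eq_abs, abs_mul, deriv_pfun]
    have h1 : |u x| ≤ 1 := by rw [abs_of_nonneg (hb x hx).1]; exact (hb x hx).2
    have h2 : |Dfun (t n) x| ≤ 2 + 8*C :=
      Dfun_bound hC0 hC (fun y hy => derivT_zero_of_nonpos hy) (fun y hy => derivT_zero_of_one_le hy)
        (ht n) ⟨hx.1.le, hx.2.le⟩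
    calc |u x| * |Dfun (t n) x| ≤ 1 * (2 + 8*C) :=
          mul_le_mul h1 h2 (abs_nonneg _) (by norm_num)
      _ = 2 + 8*C := by ring
  have hbint : Integrable (fun _ : ℝ => 2 + 8*C) μ := by
    apply integrable_const
  have hlimae : ∀ᵐ x ∂μ, Tendsto (fun n => u x * deriv (pfun (t n)) x) atTop
      (𝓝 (u x * (-2*x))) := by
    filter_upwards [ae_restrict_mem measurableSet_Ioo] with x hx
    have htto : Tendsto t atTop (𝓝 0) := by
      have h1 : Tendsto (fun n : ℕ => (n:ℝ) + 4) atTop atTop :=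
        tendsto_atTop_add_const_right atTop (4:ℝ) tendsto_natCast_atTop_atTop
      have h2 : Tendsto (fun n : ℕ => ((n:ℝ) + 4)⁻¹) atTop (𝓝 0) := h1.inv_tendsto_atTop
      rw [htdef]
      simpa [one_div] using h2
    have hev1 : ∀ᶠ n in atTop, t n < (x + 1)/2 := htto.eventually_lt_const (by linarith [hx.1])
    have hev2 : ∀ᶠ n in atTop, t n < (1 - x)/2 := htto.eventually_lt_const (by linarith [hx.2])
    refine Tendsto.congr' ?_ tendsto_const_nhds
    filter_upwards [hev1, hev2] with n h1 h2
    rw [deriv_pfun_local (ht n) (by linarith) (by linarith)]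
  have hT : Tendsto (fun n => ∫ x, u x * deriv (pfun (t n)) x ∂μ) atTop
      (𝓝 (∫ x, u x * (-2*x) ∂μ)) :=
    tendsto_integral_of_dominated_convergence _ hmeas hbint hbound hlimae
  refine le_of_tendsto hT (Eventually.of_forall fun n => ?_)
  exact le_csSup hB (hS (pfun (t n)) (pfun_contDiff (t n)) (pfun_hcs (ht n))
    (pfun_tsupport (ht n) (ht1 n)) (pfun_abs_le (ht n) (ht1 n)))


lemma int_bdd {f : ℝ → ℝ} {c : ℝ} (hf : AEStronglyMeasurable f (volume.restrict (Set.Ioo (-1:ℝ) 1)))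
    (h : ∀ x ∈ Set.Ioo (-1:ℝ) 1, |f x| ≤ c) : IntegrableOn f (Set.Ioo (-1:ℝ) 1) := by
  refine Integrable.mono' (integrable_const c) hf ?_
  filter_upwards [ae_restrict_mem measurableSet_Ioo] with x hx
  rw [Real.norm_eq_abs]
  exact h x hx

lemma split_Ioo : Set.Ioo (-1:ℝ) 1 = Set.Ioo (-1) 0 ∪ Set.Ico 0 1 :=
  (Set.Ioo_union_Ico_eq_Ioo (by norm_num) (by norm_num)).symm

lemma disj_Ioo : Disjoint (Set.Ioo (-1:ℝ) 0) (Set.Ico 0 1) := by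
  rw [Set.disjoint_left]
  rintro x ⟨_, h2⟩ ⟨h3, _⟩
  exact absurd h3 (not_le.2 h2)

-- generic: integral over Ω of a function vanishing on Ico 0 1 and equal to f on Ioo (-1) 0
lemma integral_split (F : ℝ → ℝ) (hF : IntegrableOn F (Set.Ioo (-1:ℝ) 1))
    (h0 : ∀ x ∈ Set.Ico (0:ℝ) 1, F x = 0) :
    ∫ x in Set.Ioo (-1:ℝ) 1, F x = ∫ x in Set.Ioo (-1:ℝ) 0, F x := by
  rw [split_Ioo] at hF ⊢
  rw [setIntegral_union disj_Ioo measurableSet_Ico (hF.mono_set subset_union_left)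
    (hF.mono_set subset_union_right)]
  have : ∫ x in Set.Ico (0:ℝ) 1, F x = 0 := by
    rw [setIntegral_congr_fun measurableSet_Ico h0]
    simp
  rw [this, add_zero]

lemma integral_linear_Ioo (a b : ℝ) :
    ∫ x in Set.Ioo (-1:ℝ) 0, (a + b * x) = a - b/2 := by
  rw [← integral_Ioc_eq_integral_Ioo, ← intervalIntegral.integral_of_le (by norm_num : (-1:ℝ) ≤ 0)]
  have h1 : IntervalIntegrable (fun _ : ℝ => a) volume (-1) 0 := intervalIntegrable_const
  have h2 : IntervalIntegrable (fun x : ℝ => b * x) volume (-1) 0 :=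
    (intervalIntegral.intervalIntegrable_id).const_mul b
  rw [intervalIntegral.integral_add h1 h2, intervalIntegral.integral_const,
    intervalIntegral.integral_const_mul, integral_id]
  norm_num
  ring
lemma gmeas : Measurable (fun x : ℝ => if x < 0 then (-1:ℝ) else 1) :=
  Measurable.ite (measurableSet_lt measurable_id measurable_const) measurable_const measurable_const

lemma usmeas : Measurable (fun x : ℝ => if x < 0 then (1:ℝ) else 0) :=
  Measurable.ite (measurableSet_lt measurable_id measurable_const) measurable_const measurable_const

lemma habs_g (x : ℝ) : |(if x < 0 then (-1:ℝ) else 1)| = 1 := by split <;> norm_num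

lemma habs_us (x : ℝ) : |(if x < 0 then (1:ℝ) else 0)| ≤ 1 := by split <;> norm_num

lemma hfun_bound (α : ℝ) (hα : 2 < α) {x : ℝ} (hx : x ∈ Set.Ioo (-1:ℝ) 1) :
    |α * (if x < 0 then (-1:ℝ) else 1) + (-2*x)| ≤ α + 2 := by
  refine (abs_add_le _ _).trans ?_
  have h1 : |α * (if x < 0 then (-1:ℝ) else 1)| = α := by
    rw [abs_mul, habs_g, mul_one, abs_of_pos (by linarith)]
  have h2 : |(-2*x)| ≤ 2 := by
    rw [abs_mul]
    have : |x| ≤ 1 := abs_le.2 ⟨hx.1.le, hx.2.le⟩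
    calc |(-2:ℝ)| * |x| ≤ 2 * 1 := by
          refine mul_le_mul (by norm_num) this (abs_nonneg _) (by norm_num)
      _ = 2 := by ring
  linarith

-- integrability of v * (α g - 2x) for 0 ≤ v ≤ 1 on Ω
lemma hIvh (α : ℝ) (hα : 2 < α) {v : ℝ → ℝ} (hv : Measurable v)
    (hb : ∀ x ∈ Set.Ioo (-1:ℝ) 1, 0 ≤ v x ∧ v x ≤ 1) :
    IntegrableOn (fun x => v x * (α * (if x < 0 then (-1:ℝ) else 1) + (-2*x)))
      (Set.Ioo (-1:ℝ) 1) := by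
  refine int_bdd (c := α + 2) ((hv.mul (((measurable_const.mul gmeas)).add (by fun_prop))).aestronglyMeasurable)
    (fun x hx => ?_)
  rw [abs_mul]
  obtain ⟨h0, h1⟩ := hb x hx
  calc |v x| * |α * (if x < 0 then (-1:ℝ) else 1) + (-2*x)| ≤ 1 * (α + 2) := by
        refine mul_le_mul ?_ (hfun_bound α hα hx) (abs_nonneg _) (by norm_num)
        rw [abs_of_nonneg h0]; exact h1
    _ = α + 2 := by ring

lemma hIvg {v : ℝ → ℝ} (hv : Measurable v)
    (hb : ∀ x ∈ Set.Ioo (-1:ℝ) 1, 0 ≤ v x ∧ v x ≤ 1) :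
    IntegrableOn (fun x => v x * (if x < 0 then (-1:ℝ) else 1)) (Set.Ioo (-1:ℝ) 1) := by
  refine int_bdd (c := 1) ((hv.mul gmeas).aestronglyMeasurable) (fun x hx => ?_)
  rw [abs_mul, habs_g, mul_one, abs_of_nonneg (hb x hx).1]
  exact (hb x hx).2

lemma hIvx {v : ℝ → ℝ} (hv : Measurable v)
    (hb : ∀ x ∈ Set.Ioo (-1:ℝ) 1, 0 ≤ v x ∧ v x ≤ 1) :
    IntegrableOn (fun x => v x * (-2*x)) (Set.Ioo (-1:ℝ) 1) := by
  refine int_bdd (c := 2) ((hv.mul (by fun_prop)).aestronglyMeasurable) (fun x hx => ?_)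
  rw [abs_mul]
  have hx2 : |(-2*x)| ≤ 2 := by
    rw [abs_mul]
    have : |x| ≤ 1 := abs_le.2 ⟨hx.1.le, hx.2.le⟩
    calc |(-2:ℝ)| * |x| ≤ 2 * 1 :=
          mul_le_mul (by norm_num) this (abs_nonneg _) (by norm_num)
      _ = 2 := by ring
  calc |v x| * |(-2*x)| ≤ 1 * 2 := by
        refine mul_le_mul ?_ hx2 (abs_nonneg _) (by norm_num)
        rw [abs_of_nonneg (hb x hx).1]; exact (hb x hx).2
    _ = 2 := by norm_num

lemma ustar_bound : ∀ x ∈ Set.Ioo (-1:ℝ) 1, 0 ≤ (if x < 0 then (1:ℝ) else 0) ∧ (if x < 0 then (1:ℝ) else 0) ≤ 1 := by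
  intro x _; split <;> norm_num

lemma Jstar_eq (α : ℝ) (hα : 2 < α) :
    ∫ x in Set.Ioo (-1:ℝ) 1,
      (if x < 0 then (1:ℝ) else 0) * (α * (if x < 0 then (-1:ℝ) else 1) + (-2*x)) = 1 - α := by
  rw [integral_split _ (hIvh α hα usmeas ustar_bound) (fun x hx => by simp [not_lt.2 hx.1])]
  rw [setIntegral_congr_fun measurableSet_Ioo
    (g := fun x => (-α) + (-2) * x) (fun x hx => by simp only [if_pos hx.2]; ring)]
  rw [integral_linear_Ioo (-α) (-2)]
  ring

lemma Istar_g_eq :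
    ∫ x in Set.Ioo (-1:ℝ) 1, (if x < 0 then (1:ℝ) else 0) * (if x < 0 then (-1:ℝ) else 1) = -1 := by
  rw [integral_split _ (hIvg usmeas ustar_bound) (fun x hx => by simp [not_lt.2 hx.1])]
  rw [setIntegral_congr_fun measurableSet_Ioo
    (g := fun x => (-1) + 0 * x) (fun x hx => by simp only [if_pos hx.2]; ring)]
  rw [integral_linear_Ioo (-1) 0]
  ring

lemma intp_eq (p : ℝ → ℝ) (hp : ContDiff ℝ 1 p) (hts : tsupport p ⊆ Set.Ioo (-1:ℝ) 1) :
    ∫ x in Set.Ioo (-1:ℝ) 1, (if x < 0 then (1:ℝ) else 0) * deriv p x = p 0 := by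
  have hd : Continuous (deriv p) := hp.continuous_deriv le_rfl
  have hF : IntegrableOn (fun x => (if x < 0 then (1:ℝ) else 0) * deriv p x) (Set.Ioo (-1:ℝ) 1) := by
    refine Integrable.bdd_mul ((hd.integrableOn_Icc (a := (-1:ℝ)) (b := 1)).mono_set
      Set.Ioo_subset_Icc_self) usmeas.aestronglyMeasurable (c := 1) (Filter.Eventually.of_forall fun x => ?_)
    rw [Real.norm_eq_abs]; exact habs_us x
  rw [integral_split _ hF (fun x hx => by simp [not_lt.2 hx.1])]
  rw [setIntegral_congr_fun measurableSet_Ioo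
    (g := fun x => deriv p x) (fun x hx => by simp [if_pos hx.2])]
  rw [← integral_Ioc_eq_integral_Ioo, ← intervalIntegral.integral_of_le (by norm_num : (-1:ℝ) ≤ 0)]
  rw [intervalIntegral.integral_deriv_eq_sub
    (fun x _ => (hp.differentiable (by norm_num)).differentiableAt) (hd.intervalIntegrable _ _)]
  have hm1 : p (-1) = 0 := by
    refine image_eq_zero_of_notMem_tsupport (fun hmem => ?_)
    exact absurd (hts hmem).1 (lt_irrefl _)
  rw [hm1]; ring

lemma pointwise_mono (α : ℝ) (hα : 2 < α) {u : ℝ → ℝ}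
    (hb : ∀ x ∈ Set.Ioo (-1:ℝ) 1, 0 ≤ u x ∧ u x ≤ 1) :
    ∀ x ∈ Set.Ioo (-1:ℝ) 1,
      (if x < 0 then (1:ℝ) else 0) * (α * (if x < 0 then (-1:ℝ) else 1) + (-2*x))
      ≤ u x * (α * (if x < 0 then (-1:ℝ) else 1) + (-2*x)) := by
  intro x hx
  obtain ⟨h0, h1⟩ := hb x hx
  by_cases hneg : x < 0
  · simp only [if_pos hneg]
    nlinarith [hx.1]
  · simp only [if_neg hneg]
    push_neg at hneg
    nlinarith [hx.2]
theorem stmt_16 (α : ℝ) (hα : 2 < α) :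
    let Ω : Set ℝ := Set.Ioo (-1 : ℝ) 1
    let g : ℝ → ℝ := fun x => if x < 0 then -1 else 1
    let ustar : ℝ → ℝ := fun x => if x < 0 then 1 else 0
    -- the dual set defining the total variation on Ω
    let DS : (ℝ → ℝ) → Set ℝ := fun u =>
      {r : ℝ | ∃ p : ℝ → ℝ, ContDiff ℝ 1 p ∧ HasCompactSupport p ∧
        tsupport p ⊆ Ω ∧ (∀ x : ℝ, |p x| ≤ 1) ∧ r = ∫ x in Ω, u x * deriv p x}
    let TV : (ℝ → ℝ) → ℝ := fun u => sSup (DS u)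
    let En : (ℝ → ℝ) → ℝ := fun u => α * (∫ x in Ω, u x * g x) + TV u
    ∀ u : ℝ → ℝ, Measurable u →
      (∀ x ∈ Ω, 0 ≤ u x ∧ u x ≤ 1) →
      -- u ∈ BV(Ω): the dual set is bounded above
      BddAbove (DS u) →
      En ustar ≤ En u ∧ (En u ≤ En ustar → ∀ᵐ x ∂(volume.restrict Ω), u x = ustar x) := by
  intro Ω g ustar DS TV En u hu hb hB
  have hb' : ∀ x ∈ Set.Ioo (-1:ℝ) 1, 0 ≤ u x ∧ u x ≤ 1 := hb
  have hB' : BddAbove (DS u) := hB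
  -- 0 ∈ DS ustar
  have hDSns : (0:ℝ) ∈ DS ustar := by
    refine ⟨fun _ => 0, contDiff_const,
      HasCompactSupport.intro (isCompact_Icc (a := (0:ℝ)) (b := 0)) (fun x _ => rfl), ?_, ?_, ?_⟩
    · have : tsupport (fun _ : ℝ => (0:ℝ)) = ∅ := by
        simp [tsupport, Function.support]
      rw [this]
      exact Set.empty_subset _
    · intro x; simp
    · simp
  -- TV ustar ≤ 1
  have hTVstar : sSup (DS ustar) ≤ 1 := by
    refine csSup_le ⟨0, hDSns⟩ ?_
    rintro r ⟨p, hp1, hp2, hp3, hp4, rfl⟩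
    calc (∫ x in Ω, ustar x * deriv p x)
        = ∫ x in Set.Ioo (-1:ℝ) 1, (if x < 0 then (1:ℝ) else 0) * deriv p x := rfl
      _ = p 0 := intp_eq p hp1 hp3
      _ ≤ |p 0| := le_abs_self _
      _ ≤ 1 := hp4 0
  -- lower bound: ∫ u (-2x) ≤ sSup (DS u)
  have hlow : (∫ x in Set.Ioo (-1:ℝ) 1, u x * (-2*x)) ≤ sSup (DS u) :=
    tv_lower u hu hb' (DS u) (fun p h1 h2 h3 h4 => ⟨p, h1, h2, h3, h4, rfl⟩) hB'
  -- J comparison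
  have hJm : (1 - α : ℝ)
      ≤ ∫ x in Set.Ioo (-1:ℝ) 1, u x * (α * (if x < 0 then (-1:ℝ) else 1) + (-2*x)) := by
    rw [← Jstar_eq α hα]
    exact setIntegral_mono_on (hIvh α hα usmeas ustar_bound) (hIvh α hα hu hb')
      measurableSet_Ioo (pointwise_mono α hα hb')
  have hsplit : (∫ x in Set.Ioo (-1:ℝ) 1, u x * (α * (if x < 0 then (-1:ℝ) else 1) + (-2*x)))
      = α * (∫ x in Set.Ioo (-1:ℝ) 1, u x * (if x < 0 then (-1:ℝ) else 1))
        + ∫ x in Set.Ioo (-1:ℝ) 1, u x * (-2*x) := by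
    calc (∫ x in Set.Ioo (-1:ℝ) 1, u x * (α * (if x < 0 then (-1:ℝ) else 1) + (-2*x)))
        = ∫ x in Set.Ioo (-1:ℝ) 1,
            (α * (u x * (if x < 0 then (-1:ℝ) else 1)) + u x * (-2*x)) :=
          integral_congr_ae (Filter.Eventually.of_forall fun x => by ring)
      _ = _ := by
          rw [integral_add ((hIvg hu hb').const_mul α) (hIvx hu hb'), integral_const_mul]
  have hEnstar : En ustar ≤ 1 - α := by
    show α * (∫ x in Ω, ustar x * g x) + sSup (DS ustar) ≤ 1 - α
    have h1 : (∫ x in Ω, ustar x * g x) = -1 := Istar_g_eq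
    rw [h1]
    linarith
  have hEnu : (1 - α : ℝ) ≤ En u := by
    show (1 - α : ℝ) ≤ α * (∫ x in Ω, u x * g x) + sSup (DS u)
    have h2 : (∫ x in Ω, u x * g x)
        = ∫ x in Set.Ioo (-1:ℝ) 1, u x * (if x < 0 then (-1:ℝ) else 1) := rfl
    rw [h2]
    have := hJm
    rw [hsplit] at this
    linarith
  refine ⟨hEnstar.trans hEnu, fun hle => ?_⟩
  -- equality case
  have hEnu' : α * (∫ x in Set.Ioo (-1:ℝ) 1, u x * (if x < 0 then (-1:ℝ) else 1))
      + sSup (DS u) ≤ 1 - α := hle.trans hEnstar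
  have hJle : (∫ x in Set.Ioo (-1:ℝ) 1, u x * (α * (if x < 0 then (-1:ℝ) else 1) + (-2*x)))
      ≤ 1 - α := by
    rw [hsplit]
    linarith
  have hJeq : (∫ x in Set.Ioo (-1:ℝ) 1, u x * (α * (if x < 0 then (-1:ℝ) else 1) + (-2*x)))
      = 1 - α := le_antisymm hJle hJm
  have hzero : (∫ x in Set.Ioo (-1:ℝ) 1,
      (u x * (α * (if x < 0 then (-1:ℝ) else 1) + (-2*x))
        - (if x < 0 then (1:ℝ) else 0) * (α * (if x < 0 then (-1:ℝ) else 1) + (-2*x)))) = 0 := by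
    rw [integral_sub (hIvh α hα hu hb') (hIvh α hα usmeas ustar_bound), hJeq, Jstar_eq α hα]
    ring
  have hnn : 0 ≤ᵐ[volume.restrict (Set.Ioo (-1:ℝ) 1)] fun x =>
      u x * (α * (if x < 0 then (-1:ℝ) else 1) + (-2*x))
        - (if x < 0 then (1:ℝ) else 0) * (α * (if x < 0 then (-1:ℝ) else 1) + (-2*x)) := by
    filter_upwards [ae_restrict_mem measurableSet_Ioo] with x hx
    have := pointwise_mono α hα hb' x hx
    simp only [Pi.zero_apply]
    linarith
  have hae0 := (integral_eq_zero_iff_of_nonneg_ae hnn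
    ((hIvh α hα hu hb').sub (hIvh α hα usmeas ustar_bound))).1 hzero
  have hne : ∀ᵐ x ∂(volume.restrict (Set.Ioo (-1:ℝ) 1)), x ≠ 0 := by
    rw [MeasureTheory.ae_iff]
    have : {x : ℝ | ¬ x ≠ 0} = {0} := by ext x; simp
    rw [this, Measure.restrict_apply (measurableSet_singleton 0)]
    exact le_antisymm ((measure_mono Set.inter_subset_left).trans
      (le_of_eq Real.volume_singleton)) (by simp)
  show ∀ᵐ x ∂(volume.restrict (Set.Ioo (-1:ℝ) 1)), u x = if x < 0 then (1:ℝ) else 0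
  filter_upwards [hae0, ae_restrict_mem measurableSet_Ioo, hne] with x h1 h2 h3
  simp only [Pi.zero_apply] at h1
  by_cases hneg : x < 0
  · simp only [if_pos hneg] at h1 ⊢
    have hH : α * (-1:ℝ) + (-2*x) < 0 := by nlinarith [h2.1]
    have hfac : (u x - 1) * (α * (-1:ℝ) + (-2*x)) = 0 := by linarith [h1]
    rcases mul_eq_zero.1 hfac with h | h
    · linarith
    · exact absurd h (ne_of_lt hH)
  · simp only [if_neg hneg] at h1 ⊢
    push_neg at hneg
    have hH : 0 < α * (1:ℝ) + (-2*x) := by nlinarith [h2.2]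
    have hfac : u x * (α * (1:ℝ) + (-2*x)) = 0 := by linarith [h1]
    rcases mul_eq_zero.1 hfac with h | h
    · exact h
    · exact absurd h (ne_of_gt hH)
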